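/- Let D = (V, A, ψ) be a multidigraph and s ∈ V a vertex. Let P and Q be two subsets of V with V = P ⊔ Q. Let E be a subset of A, and let C be a subset of A(P,Q). Then S(E) = P if and only if S(E ∪ C) = P. -/

import Mathlib

/-!
A multidigraph is given by two finite types `V` (vertices) and `A` (arcs)
together with a map `ψ : A → V × V` sending each arc to its (source, target) pair.
For a subset `B ⊆ A`, the induced subdigraph `D⟨B⟩` has vertex set `V` and arc set `B`.
-/

/-- There is an arc of `B` from `v` to `w` in the subdigraph `D⟨B⟩`. -/
def ArcStep {V A : Type*} (ψ : A → V × V) (B : Set A) (v w : V) : Prop :=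
  ∃ a ∈ B, ψ a = (v, w)

/-- `v` can `B`-reach `w`: the subdigraph `D⟨B⟩` has a walk from `v` to `w`. -/
def CanReach {V A : Type*} (ψ : A → V × V) (B : Set A) (v w : V) : Prop :=
  Relation.ReflTransGen (ArcStep ψ B) v w

/-- `B ⊆ A` is acyclic: the subdigraph `D⟨B⟩` has no directed cycles
(equivalently, no closed walk of positive length). -/
def IsAcyclic {V A : Type*} (ψ : A → V × V) (B : Set A) : Prop :=
  ∀ v : V, ¬ Relation.TransGen (ArcStep ψ B) v v

/-- `B` is an `s`-convergence: `B` is acyclic and `s` is a to-root of `D⟨B⟩`,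
i.e. every vertex can `B`-reach `s`. -/
def IsConvergence {V A : Type*} (ψ : A → V × V) (B : Set A) (s : V) : Prop :=
  IsAcyclic ψ B ∧ ∀ v : V, CanReach ψ B v s

/-- `γ_k(s)`: the number of `s`-convergences of size `k`. -/
noncomputable def gammaCount {V A : Type*} (ψ : A → V × V) (k : ℕ) (s : V) : ℕ :=
  {B : Set A | IsConvergence ψ B s ∧ B.ncard = k}.ncard

/-- The attraction basin of `s` with respect to `B`: all vertices that can `B`-reach `s`. -/
def basin {V A : Type*} (ψ : A → V × V) (B : Set A) (s : V) : Set V :=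
  {v : V | CanReach ψ B v s}

/-- `A(P,Q)`: the set of arcs with source in `P` and target in `Q`. -/
def arcsFromTo {V A : Type*} (ψ : A → V × V) (P Q : Set V) : Set A :=
  {a : A | (ψ a).1 ∈ P ∧ (ψ a).2 ∈ Q}

/-- The outdegree of a vertex: the number of arcs with source `v`. -/
noncomputable def outDeg {V A : Type*} (ψ : A → V × V) (v : V) : ℕ :=
  {a : A | (ψ a).1 = v}.ncard

/-- The indegree of a vertex: the number of arcs with target `v`. -/
noncomputable def inDeg {V A : Type*} (ψ : A → V × V) (v : V) : ℕ :=
  {a : A | (ψ a).2 = v}.ncard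

/-- The digraph is balanced: each vertex has outdegree equal to indegree. -/
def IsBalanced {V A : Type*} (ψ : A → V × V) : Prop :=
  ∀ v : V, outDeg ψ v = inDeg ψ v

/-- `U_k`: the set of all acyclic `k`-element subsets `B` of `A` such that each
vertex can `B`-reach `s` or can `B`-reach `t`. -/
def Uset {V A : Type*} (ψ : A → V × V) (s t : V) (k : ℕ) : Set (Set A) :=
  {B : Set A | IsAcyclic ψ B ∧ B.ncard = k ∧ basin ψ B s ∪ basin ψ B t = Set.univ}

/-- `X_i^{P,Q}`: the set of all acyclic `i`-element subsets `B` of `A` with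
`S(B) = P` and `T(B) = Q` (empty for negative `i`). -/
def Xset {V A : Type*} (ψ : A → V × V) (s t : V) (P Q : Set V) (i : ℤ) : Set (Set A) :=
  {B : Set A | IsAcyclic ψ B ∧ (B.ncard : ℤ) = i ∧ basin ψ B s = P ∧ basin ψ B t = Q}

/-- `|X_i^{P,Q}|`. -/
noncomputable def Xcount {V A : Type*} (ψ : A → V × V) (s t : V) (P Q : Set V) (i : ℤ) : ℕ :=
  (Xset ψ s t P Q i).ncard


lemma basin_mono {V A : Type*} (ψ : A → V × V) (s : V) {E F : Set A} (h : E ⊆ F) :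
    basin ψ E s ⊆ basin ψ F s := by
  intro v hv
  exact Relation.ReflTransGen.mono (fun x y ⟨a, ha, hψ⟩ => ⟨a, h ha, hψ⟩) _ _ hv

lemma basin_union_subset' {V A : Type*} (ψ : A → V × V) (s : V) (P Q : Set V)
    (hdisj : P ∩ Q = ∅) (E C : Set A) (hC : C ⊆ arcsFromTo ψ P Q)
    (hE : basin ψ E s ⊆ P) : basin ψ (E ∪ C) s ⊆ basin ψ E s := by
  intro v hv
  induction hv using Relation.ReflTransGen.head_induction_on with
  | refl => exact Relation.ReflTransGen.refl
  | head h _ ih =>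
    obtain ⟨a, ha, hψ⟩ := h
    rcases ha with ha | ha
    · exact Relation.ReflTransGen.head ⟨a, ha, hψ⟩ ih
    · exfalso
      have hQ : (ψ a).2 ∈ Q := (hC ha).2
      have hP : (ψ a).2 ∈ P := by rw [hψ]; exact hE ih
      have : (ψ a).2 ∈ P ∩ Q := ⟨hP, hQ⟩
      simp [hdisj] at this

/-- If `V = P ⊔ Q`, `E ⊆ A` and `C ⊆ A(P,Q)`, then
`S(E) = P` if and only if `S(E ∪ C) = P`. -/
theorem basin_eq_iff_basin_union_eq {V A : Type*} [Fintype V] [Fintype A]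
    (ψ : A → V × V) (s : V) (P Q : Set V)
    (hunion : P ∪ Q = Set.univ) (hdisj : P ∩ Q = ∅)
    (E C : Set A) (hC : C ⊆ arcsFromTo ψ P Q) :
    basin ψ E s = P ↔ basin ψ (E ∪ C) s = P := by
  constructor
  · intro h
    apply Set.Subset.antisymm
    · exact (basin_union_subset' ψ s P Q hdisj E C hC h.subset).trans h.subset
    · rw [← h]; exact basin_mono ψ s Set.subset_union_left
  · intro h
    apply Set.Subset.antisymm
    · exact (basin_mono ψ s Set.subset_union_left).trans h.subset
    · rw [← h]
      exact basin_union_subset' ψ s P Q hdisj E C hC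
        ((basin_mono ψ s Set.subset_union_left).trans h.subset)
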